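/- With the notation of the conformal Lagrangian set-up for the structure F: let x : ℝ → ℝ^{4n} be a C² curve, and suppose that for every t ∈ ℝ and every w ∈ ℝ^{4n}, Φ_L^F(x(t))(ẋ(t), w) = D₁E_L^F(x(t), ẋ(t))·w, where D₁ denotes the Fréchet derivative of E_L^F in its first (position) argument with the velocity argument held fixed. Then the conformal Euler–Lagrange equations (3.2) hold along x: for every i ∈ {1,…,n} and every t ∈ ℝ, a·(d/dt)(e^{−λ(x(t))}·(∂L/∂x_i)(x(t))) + (∂L/∂x_{n+i})(x(t)) = 0, a·(d/dt)(e^{λ(x(t))}·(∂L/∂x_{n+i})(x(t))) − (∂L/∂x_i)(x(t)) = 0, a·(d/dt)(e^{−λ(x(t))}·(∂L/∂x_{2n+i})(x(t))) + (∂L/∂x_{3n+i})(x(t)) = 0, and a·(d/dt)(e^{λ(x(t))}·(∂L/∂x_{3n+i})(x(t))) − (∂L/∂x_{2n+i})(x(t)) = 0. -/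

import Mathlib

open Real

noncomputable section

/-- The partial derivative `∂f/∂x_k` of `f : ℝ^{4n} → ℝ` at `x`, in the
coordinate direction `k`. -/
def pd {n : ℕ} (f : ((Fin 4 × Fin n) → ℝ) → ℝ) (k : Fin 4 × Fin n)
    (x : (Fin 4 × Fin n) → ℝ) : ℝ :=
  fderiv ℝ f x (Pi.single k 1)

/-- The conformal 1-form `d_F L` of the structure `F` (formula (3.11)),
viewed as a map assigning to each point `x` the linear functional
`w ↦ (d_F L)(x)(w)`. -/
def omegaF {n : ℕ} (a : ℝ) (L lam : ((Fin 4 × Fin n) → ℝ) → ℝ)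
    (x w : (Fin 4 × Fin n) → ℝ) : ℝ :=
  ∑ i : Fin n,
    (a * exp (lam x) * pd L (1, i) x * w (0, i)
     - a * exp (-lam x) * pd L (0, i) x * w (1, i)
     + a * exp (lam x) * pd L (3, i) x * w (2, i)
     - a * exp (-lam x) * pd L (2, i) x * w (3, i))

/-- The closed 2-form `Φ_L^F = -d(d_F L)`:
`Φ_L^F(x)(u, v) = (Dω_F(x)·v)(u) - (Dω_F(x)·u)(v)`. -/
def PhiF {n : ℕ} (a : ℝ) (L lam : ((Fin 4 × Fin n) → ℝ) → ℝ)
    (x u v : (Fin 4 × Fin n) → ℝ) : ℝ :=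
  fderiv ℝ (fun y => omegaF a L lam y u) x v
    - fderiv ℝ (fun y => omegaF a L lam y v) x u

/-- The conformal energy function `E_L^F` (formula (3.14)) at a point `x` with
velocity vector `X`. -/
def EF {n : ℕ} (a : ℝ) (L lam : ((Fin 4 × Fin n) → ℝ) → ℝ)
    (x X : (Fin 4 × Fin n) → ℝ) : ℝ :=
  (∑ i : Fin n,
    (a * X (0, i) * exp (lam x) * pd L (1, i) x
     - a * X (1, i) * exp (-lam x) * pd L (0, i) x
     + a * X (2, i) * exp (lam x) * pd L (3, i) x
     - a * X (3, i) * exp (-lam x) * pd L (2, i) x)) - L x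

lemma pd_contDiff {n : ℕ} {L : ((Fin 4 × Fin n) → ℝ) → ℝ} (hL : ContDiff ℝ 2 L)
    (k : Fin 4 × Fin n) : ContDiff ℝ 1 (pd L k) := by
  have h : ContDiff ℝ 1 (fderiv ℝ L) := hL.fderiv_right (m := 1) (by norm_num)
  exact h.clm_apply contDiff_const

section single

variable {n : ℕ} (a : ℝ) (L lam : ((Fin 4 × Fin n) → ℝ) → ℝ)

lemma os0 (i : Fin n) (y : (Fin 4 × Fin n) → ℝ) :
    omegaF a L lam y (Pi.single ((0 : Fin 4), i) 1) = a * exp (lam y) * pd L (1, i) y := by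
  unfold omegaF
  rw [Fintype.sum_eq_single i]
  · simp [Pi.single_apply]
  · intro j hj
    simp [Pi.single_apply, Prod.ext_iff, hj]

lemma os1 (i : Fin n) (y : (Fin 4 × Fin n) → ℝ) :
    omegaF a L lam y (Pi.single ((1 : Fin 4), i) 1) = -(a * exp (-lam y) * pd L (0, i) y) := by
  unfold omegaF
  rw [Fintype.sum_eq_single i]
  · simp [Pi.single_apply]
  · intro j hj
    simp [Pi.single_apply, Prod.ext_iff, hj]

lemma os2 (i : Fin n) (y : (Fin 4 × Fin n) → ℝ) :
    omegaF a L lam y (Pi.single ((2 : Fin 4), i) 1) = a * exp (lam y) * pd L (3, i) y := by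
  unfold omegaF
  rw [Fintype.sum_eq_single i]
  · simp [Pi.single_apply]
  · intro j hj
    simp [Pi.single_apply, Prod.ext_iff, hj]

lemma os3 (i : Fin n) (y : (Fin 4 × Fin n) → ℝ) :
    omegaF a L lam y (Pi.single ((3 : Fin 4), i) 1) = -(a * exp (-lam y) * pd L (2, i) y) := by
  unfold omegaF
  rw [Fintype.sum_eq_single i]
  · simp [Pi.single_apply]
  · intro j hj
    simp [Pi.single_apply, Prod.ext_iff, hj]

end single

/-- Along an integral curve of the dynamical equation `i_X Φ_L^F = dE_L^F`
(equation (1.1)), the conformal Euler–Lagrange equations (3.2) hold. -/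
theorem stmt8 (n : ℕ) (a : ℝ) (L lam : ((Fin 4 × Fin n) → ℝ) → ℝ)
    (hL : ContDiff ℝ 2 L) (hlam : ContDiff ℝ 2 lam)
    (x : ℝ → (Fin 4 × Fin n) → ℝ) (hx : ContDiff ℝ 2 x)
    (hdyn : ∀ (t : ℝ) (w : (Fin 4 × Fin n) → ℝ),
      PhiF a L lam (x t) (deriv x t) w
        = fderiv ℝ (fun y => EF a L lam y (deriv x t)) (x t) w) :
    ∀ (i : Fin n) (t : ℝ),
      a * deriv (fun s => exp (-lam (x s)) * pd L (0, i) (x s)) t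
          + pd L (1, i) (x t) = 0 ∧
      a * deriv (fun s => exp (lam (x s)) * pd L (1, i) (x s)) t
          - pd L (0, i) (x t) = 0 ∧
      a * deriv (fun s => exp (-lam (x s)) * pd L (2, i) (x s)) t
          + pd L (3, i) (x t) = 0 ∧
      a * deriv (fun s => exp (lam (x s)) * pd L (3, i) (x s)) t
          - pd L (2, i) (x t) = 0 := by
  -- basic differentiability facts
  have hLd : Differentiable ℝ L := hL.differentiable (by norm_num)
  have hlamd : Differentiable ℝ lam := hlam.differentiable (by norm_num)
  have hpdd : ∀ k, Differentiable ℝ (pd L k) :=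
    fun k => (pd_contDiff hL k).differentiable (by norm_num)
  have hxd : Differentiable ℝ x := hx.differentiable (by norm_num)
  have hexp : Differentiable ℝ (fun y => exp (lam y)) := hlamd.exp
  have hexpn : Differentiable ℝ (fun y => exp (-lam y)) := hlamd.neg.exp
  -- differentiability of ω(·, X)
  have hω : ∀ X : (Fin 4 × Fin n) → ℝ,
      Differentiable ℝ (fun y => omegaF a L lam y X) := by
    intro X
    unfold omegaF
    apply Differentiable.fun_sum
    intro i _
    exact ((((differentiable_const a).mul hexp).mul (hpdd (1, i))).mul
            (differentiable_const (X (0, i)))).sub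
        ((((differentiable_const a).mul hexpn).mul (hpdd (0, i))).mul
            (differentiable_const (X (1, i)))) |>.add
        ((((differentiable_const a).mul hexp).mul (hpdd (3, i))).mul
            (differentiable_const (X (2, i)))) |>.sub
        ((((differentiable_const a).mul hexpn).mul (hpdd (2, i))).mul
            (differentiable_const (X (3, i))))
  -- EF(·, X) = ω(·, X) - L
  have hEFeq : ∀ X : (Fin 4 × Fin n) → ℝ,
      (fun y => EF a L lam y X) = fun y => omegaF a L lam y X - L y := by
    intro X
    funext y
    unfold EF omegaF
    congr 1
    apply Finset.sum_congr rfl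
    intro i _
    ring
  intro i t
  set p := x t with hp
  set u := deriv x t with hu
  -- key consequence of the dynamical equation
  have key : ∀ w : (Fin 4 × Fin n) → ℝ,
      fderiv ℝ (fun y => omegaF a L lam y w) p u = fderiv ℝ L p w := by
    intro w
    have h := hdyn t w
    rw [hEFeq u] at h
    rw [fderiv_fun_sub ((hω u) p) (hLd p)] at h
    unfold PhiF at h
    simp only [ContinuousLinearMap.sub_apply] at h
    rw [← hp, ← hu] at h
    linarith
  -- chain rule helper
  have chain : ∀ g : ((Fin 4 × Fin n) → ℝ) → ℝ, Differentiable ℝ g →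
      deriv (fun s => g (x s)) t = fderiv ℝ g p u := by
    intro g hg
    exact ((hg p).hasFDerivAt.comp_hasDerivAt t (hxd t).hasDerivAt).deriv
  have hfL : ∀ k : Fin 4 × Fin n, fderiv ℝ L p (Pi.single k 1) = pd L k p := fun k => rfl
  -- four cases
  have c0 : ∀ j : Fin n, Differentiable ℝ (fun s => exp (-lam (x s)) * pd L (0, j) (x s)) :=
    fun j => ((hlamd.comp hxd).neg.exp).mul ((hpdd (0, j)).comp hxd)
  have c1 : ∀ j : Fin n, Differentiable ℝ (fun s => exp (lam (x s)) * pd L (1, j) (x s)) :=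
    fun j => ((hlamd.comp hxd).exp).mul ((hpdd (1, j)).comp hxd)
  have c2 : ∀ j : Fin n, Differentiable ℝ (fun s => exp (-lam (x s)) * pd L (2, j) (x s)) :=
    fun j => ((hlamd.comp hxd).neg.exp).mul ((hpdd (2, j)).comp hxd)
  have c3 : ∀ j : Fin n, Differentiable ℝ (fun s => exp (lam (x s)) * pd L (3, j) (x s)) :=
    fun j => ((hlamd.comp hxd).exp).mul ((hpdd (3, j)).comp hxd)
  refine ⟨?_, ?_, ?_, ?_⟩
  · -- use w = single (1,i) 1
    have k1 := key (Pi.single ((1 : Fin 4), i) 1)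
    rw [hfL] at k1
    have e1 : (fun y => omegaF a L lam y (Pi.single ((1 : Fin 4), i) 1))
        = fun y => -(a * (exp (-lam y) * pd L (0, i) y)) := by
      funext y; rw [os1]; ring
    rw [e1] at k1
    have := chain (fun y => -(a * (exp (-lam y) * pd L (0, i) y))) (((((hlamd.neg.exp).mul (hpdd (0, i))).const_mul a).neg)) 
    rw [← this] at k1
    have hder : deriv (fun s => -(a * (exp (-lam (x s)) * pd L (0, i) (x s)))) t
        = -(a * deriv (fun s => exp (-lam (x s)) * pd L (0, i) (x s)) t) := by
      rw [deriv.fun_neg, deriv_const_mul _ ((c0 i) t)]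
    rw [hder] at k1
    linarith
  · have k1 := key (Pi.single ((0 : Fin 4), i) 1)
    rw [hfL] at k1
    have e1 : (fun y => omegaF a L lam y (Pi.single ((0 : Fin 4), i) 1))
        = fun y => a * (exp (lam y) * pd L (1, i) y) := by
      funext y; rw [os0]; ring
    rw [e1] at k1
    have := chain (fun y => a * (exp (lam y) * pd L (1, i) y)) ((((hlamd.exp).mul (hpdd (1, i))).const_mul a))
    rw [← this] at k1
    have hder : deriv (fun s => a * (exp (lam (x s)) * pd L (1, i) (x s))) t
        = a * deriv (fun s => exp (lam (x s)) * pd L (1, i) (x s)) t := by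
      rw [deriv_const_mul _ ((c1 i) t)]
    rw [hder] at k1
    linarith
  · have k1 := key (Pi.single ((3 : Fin 4), i) 1)
    rw [hfL] at k1
    have e1 : (fun y => omegaF a L lam y (Pi.single ((3 : Fin 4), i) 1))
        = fun y => -(a * (exp (-lam y) * pd L (2, i) y)) := by
      funext y; rw [os3]; ring
    rw [e1] at k1
    have := chain (fun y => -(a * (exp (-lam y) * pd L (2, i) y))) (((((hlamd.neg.exp).mul (hpdd (2, i))).const_mul a).neg))
    rw [← this] at k1
    have hder : deriv (fun s => -(a * (exp (-lam (x s)) * pd L (2, i) (x s)))) t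
        = -(a * deriv (fun s => exp (-lam (x s)) * pd L (2, i) (x s)) t) := by
      rw [deriv.fun_neg, deriv_const_mul _ ((c2 i) t)]
    rw [hder] at k1
    linarith
  · have k1 := key (Pi.single ((2 : Fin 4), i) 1)
    rw [hfL] at k1
    have e1 : (fun y => omegaF a L lam y (Pi.single ((2 : Fin 4), i) 1))
        = fun y => a * (exp (lam y) * pd L (3, i) y) := by
      funext y; rw [os2]; ring
    rw [e1] at k1
    have := chain (fun y => a * (exp (lam y) * pd L (3, i) y)) ((((hlamd.exp).mul (hpdd (3, i))).const_mul a))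
    rw [← this] at k1
    have hder : deriv (fun s => a * (exp (lam (x s)) * pd L (3, i) (x s))) t
        = a * deriv (fun s => exp (lam (x s)) * pd L (3, i) (x s)) t := by
      rw [deriv_const_mul _ ((c3 i) t)]
    rw [hder] at k1
    linarith

end
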